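/- Let Φ(ξ) = |ξ|^{1/2}, t, x ∈ ℝ with tx ≠ 0, and suppose k ∈ ℤ satisfies |t/x|/16 ≤ 2^{k/2} ≤ 16|t/x|. Let ξ₀ be the critical point of Q_{t,x}(ξ) = xξ + t|ξ|^{1/2} and ℓ ∈ ℤ. Then for every ξ with 2^k ≤ |ξ| ≤ 2^{k+1} and 2^{ℓ−1} ≤ |ξ − ξ₀| ≤ 2^{ℓ+1}, one has |Q'_{t,x}(ξ)| ≥ c|t|·2^{ℓ − 3k/2} for an absolute constant c > 0. -/

import Mathlib

open Real


lemma derivQ_pos (t x y : ℝ) (hy : 0 < y) :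
    deriv (fun ξ : ℝ => x * ξ + t * |ξ| ^ ((1 : ℝ) / 2)) y
      = x + t / (2 * |y| ^ ((1 : ℝ) / 2)) := by
  have h1 : HasDerivAt (fun ξ : ℝ => x * ξ + t * ξ ^ ((1 : ℝ) / 2))
      (x * 1 + t * ((1/2) * y ^ ((1:ℝ)/2 - 1))) y := by
    exact ((hasDerivAt_id y).const_mul x).add
      ((Real.hasDerivAt_rpow_const (Or.inl hy.ne')).const_mul t)
  have h2 : HasDerivAt (fun ξ : ℝ => x * ξ + t * |ξ| ^ ((1 : ℝ) / 2))
      (x * 1 + t * ((1/2) * y ^ ((1:ℝ)/2 - 1))) y := by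
    apply h1.congr_of_eventuallyEq
    filter_upwards [eventually_gt_nhds hy] with ξ hξ
    rw [abs_of_pos hξ]
  rw [h2.deriv, abs_of_pos hy]
  rw [show (1:ℝ)/2 - 1 = -(1/2) by norm_num, Real.rpow_neg hy.le]
  have : (0:ℝ) < y ^ ((1:ℝ)/2) := Real.rpow_pos_of_pos hy _
  field_simp

lemma derivQ_neg (t x y : ℝ) (hy : y < 0) :
    deriv (fun ξ : ℝ => x * ξ + t * |ξ| ^ ((1 : ℝ) / 2)) y
      = x - t / (2 * |y| ^ ((1 : ℝ) / 2)) := by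
  have hny : (0:ℝ) < -y := by linarith
  have h0 : HasDerivAt (fun ξ : ℝ => (-ξ) ^ ((1:ℝ)/2))
      ((1/2) * (-y) ^ ((1:ℝ)/2 - 1) * (-1)) y := by
    exact (Real.hasDerivAt_rpow_const (Or.inl hny.ne')).comp y (hasDerivAt_neg y)
  have h2 : HasDerivAt (fun ξ : ℝ => x * ξ + t * |ξ| ^ ((1 : ℝ) / 2))
      (x * 1 + t * ((1/2) * (-y) ^ ((1:ℝ)/2 - 1) * (-1))) y := by
    apply (((hasDerivAt_id y).const_mul x).add (h0.const_mul t)).congr_of_eventuallyEq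
    filter_upwards [eventually_lt_nhds hy] with ξ hξ
    rw [abs_of_neg hξ]; rfl
  rw [h2.deriv, abs_of_neg hy]
  rw [show (1:ℝ)/2 - 1 = -(1/2) by norm_num, Real.rpow_neg hny.le]
  have : (0:ℝ) < (-y) ^ ((1:ℝ)/2) := Real.rpow_pos_of_pos hny _
  field_simp
  ring

lemma case_same (t D a b P E : ℝ) (ha : 0 < a) (hb : 0 < b) (hP : 0 < P)
    (haP : a ≤ 2*P) (hbP : b ≤ 8*P) (hE : 0 < E)
    (hD : |b - a| * (a + b) = D) (hED : E/2 ≤ D) :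
    (1/1024) * |t| * (E / P^3) ≤ |t * (b-a) / (2*a*b)| := by
  have hm : 0 ≤ |b - a| := abs_nonneg _
  have h2ab : (0:ℝ) < 2*a*b := by positivity
  rw [abs_div, abs_mul, abs_of_pos h2ab]
  rw [← mul_div_assoc, le_div_iff₀ h2ab, div_eq_mul_inv]
  have hE20 : E ≤ 20 * (|b - a| * P) := by
    nlinarith [mul_le_mul_of_nonneg_left (show a + b ≤ 10*P by linarith) hm]
  have hab : 2*a*b ≤ 32*P^2 := by nlinarith
  have hPi : (0:ℝ) ≤ (P^3)⁻¹ := by positivity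
  have key : E*(2*a*b) ≤ 640 * (|b-a| * P^3) := by
    nlinarith [mul_le_mul hE20 hab (by positivity) (by positivity)]
  have h640 : |t| * (P^3)⁻¹ * (640 * (|b - a| * P^3)) = 640 * (|t| * |b - a|) := by
    field_simp
  have final := mul_le_mul_of_nonneg_left key (mul_nonneg (abs_nonneg t) hPi)
  nlinarith [final, h640, mul_nonneg (abs_nonneg t) hm]

lemma case_diff (t a b P E : ℝ) (ha : 0 < a) (hb : 0 < b) (hP : 0 < P)
    (haP : a ≤ 2*P) (hE0 : 0 ≤ E) (hE : E ≤ 256*P^2) :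
    (1/1024) * |t| * (E / P^3) ≤ |t * (b+a) / (2*a*b)| := by
  have h2ab : (0:ℝ) < 2*a*b := by positivity
  rw [abs_div, abs_mul, abs_of_pos h2ab, abs_of_pos (by positivity : (0:ℝ) < b + a)]
  rw [← mul_div_assoc, le_div_iff₀ h2ab, div_eq_mul_inv]
  have hPi : (0:ℝ) ≤ (P^3)⁻¹ := by positivity
  have key : E*(2*a*b) ≤ 1024 * (b * P^3) := by
    nlinarith [mul_le_mul hE (show 2*a*b ≤ 2*(2*P)*b by nlinarith) (by positivity) (by positivity)]
  have h1024 : |t| * (P^3)⁻¹ * (1024 * (b * P^3)) = 1024 * (|t| * b) := by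
    field_simp
  have final := mul_le_mul_of_nonneg_left key (mul_nonneg (abs_nonneg t) hPi)
  nlinarith [final, h1024, mul_nonneg (abs_nonneg t) hb.le, mul_nonneg (abs_nonneg t) ha.le]


set_option maxHeartbeats 1000000 in
/-- lower bound `|Q'_{t,x}(ξ)| ≳ |t| 2^{ℓ−3k/2}` away from the
stationary point `ξ₀` in the stationary-frequency regime `|t/x|/16 ≤ 2^{k/2} ≤ 16|t/x|`. -/
theorem stationary_regime_phase_lower_bound :
    ∃ c > 0, ∀ (t x : ℝ) (k ℓ : ℤ) (ξ₀ : ℝ), t * x ≠ 0 →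
      |t / x| / 16 ≤ (2 : ℝ) ^ ((k : ℝ) / 2) →
      (2 : ℝ) ^ ((k : ℝ) / 2) ≤ 16 * |t / x| →
      ξ₀ ≠ 0 →
      deriv (fun ξ : ℝ => x * ξ + t * |ξ| ^ ((1 : ℝ) / 2)) ξ₀ = 0 →
      ∀ ξ : ℝ, (2 : ℝ) ^ k ≤ |ξ| → |ξ| ≤ (2 : ℝ) ^ (k + 1) →
        (2 : ℝ) ^ (ℓ - 1 : ℤ) ≤ |ξ - ξ₀| → |ξ - ξ₀| ≤ (2 : ℝ) ^ (ℓ + 1 : ℤ) →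
        c * |t| * (2 : ℝ) ^ ((ℓ : ℝ) - 3 * (k : ℝ) / 2) ≤
          |deriv (fun η : ℝ => x * η + t * |η| ^ ((1 : ℝ) / 2)) ξ| := by
  refine ⟨1/1024, by norm_num, ?_⟩
  intro t x k ℓ ξ₀ htx h1 h2 hξ₀ne hcrit ξ hk1 hk2 hl1 hl2
  have ht : t ≠ 0 := fun h => htx (by simp [h])
  have hx : x ≠ 0 := fun h => htx (by simp [h])
  have hξne : ξ ≠ 0 := by
    have : (0:ℝ) < |ξ| := lt_of_lt_of_le (zpow_pos (by norm_num) k) hk1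
    exact abs_ne_zero.mp this.ne'
  set P : ℝ := (2 : ℝ) ^ ((k : ℝ) / 2) with hPdef
  have hP : 0 < P := Real.rpow_pos_of_pos (by norm_num) _
  set a : ℝ := |ξ| ^ ((1:ℝ)/2) with hadef
  set b : ℝ := |ξ₀| ^ ((1:ℝ)/2) with hbdef
  have ha : 0 < a := Real.rpow_pos_of_pos (abs_pos.mpr hξne) _
  have hb : 0 < b := Real.rpow_pos_of_pos (abs_pos.mpr hξ₀ne) _
  have ha2 : a ^ 2 = |ξ| := by
    rw [hadef, ← Real.rpow_natCast (|ξ| ^ ((1:ℝ)/2)) 2, ← Real.rpow_mul (abs_nonneg ξ)]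
    norm_num
  have hb2 : b ^ 2 = |ξ₀| := by
    rw [hbdef, ← Real.rpow_natCast (|ξ₀| ^ ((1:ℝ)/2)) 2, ← Real.rpow_mul (abs_nonneg ξ₀)]
    norm_num
  have hP2 : P ^ 2 = (2:ℝ) ^ (k : ℤ) := by
    rw [hPdef, ← Real.rpow_intCast 2 k, ← Real.rpow_natCast ((2:ℝ) ^ ((k:ℝ)/2)) 2,
      ← Real.rpow_mul (by norm_num : (0:ℝ) ≤ 2)]
    norm_num
  have hP3 : P ^ 3 = (2:ℝ) ^ (3*(k:ℝ)/2) := by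
    rw [hPdef, ← Real.rpow_natCast ((2:ℝ) ^ ((k:ℝ)/2)) 3,
      ← Real.rpow_mul (by norm_num : (0:ℝ) ≤ 2)]
    ring_nf
  set E : ℝ := (2 : ℝ) ^ (ℓ : ℝ) with hEdef
  have hE : 0 < E := Real.rpow_pos_of_pos (by norm_num) _
  have hEP : (2:ℝ) ^ ((ℓ:ℝ) - 3*(k:ℝ)/2) = E / P^3 := by
    rw [Real.rpow_sub (by norm_num : (0:ℝ) < 2), hP3, hEdef]
  have hED : E / 2 ≤ |ξ - ξ₀| := by
    have : (2:ℝ) ^ (ℓ - 1 : ℤ) = E / 2 := by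
      rw [hEdef, ← Real.rpow_intCast 2 (ℓ - 1)]
      push_cast
      rw [Real.rpow_sub (by norm_num : (0:ℝ) < 2), Real.rpow_one]
    linarith [hl1, this.symm.le]
  have haP : a ≤ 2 * P := by
    have h2k1 : (2:ℝ) ^ (k + 1 : ℤ) = 2 * P ^ 2 := by
      rw [hP2, zpow_add_one₀ (by norm_num : (2:ℝ) ≠ 0)]; ring
    have ha2le : a ^ 2 ≤ 2 * P ^ 2 := by rw [ha2]; rw [h2k1] at hk2; exact hk2
    nlinarith
  -- critical point equation
  have hxeq : |x| = |t| / (2 * b) ∧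
      ((0 < ξ₀ ∧ x = -(t / (2 * b))) ∨ (ξ₀ < 0 ∧ x = t / (2 * b))) := by
    rcases lt_or_gt_of_ne hξ₀ne with h0 | h0
    · rw [derivQ_neg t x ξ₀ h0] at hcrit
      have hxe : x = t / (2 * b) := by rw [← hbdef] at hcrit; linarith
      refine ⟨?_, Or.inr ⟨h0, hxe⟩⟩
      rw [hxe, abs_div, abs_of_pos (by positivity : (0:ℝ) < 2 * b)]
    · rw [derivQ_pos t x ξ₀ h0] at hcrit
      have hxe : x = -(t / (2 * b)) := by rw [← hbdef] at hcrit; linarith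
      refine ⟨?_, Or.inl ⟨h0, hxe⟩⟩
      rw [hxe, abs_neg, abs_div, abs_of_pos (by positivity : (0:ℝ) < 2 * b)]
  obtain ⟨habsx, hsign⟩ := hxeq
  have hbP : b ≤ 8 * P := by
    have htxb : |t / x| = 2 * b := by
      rw [abs_div, habsx]
      have h0t : (0:ℝ) < |t| := abs_pos.mpr ht
      field_simp
    rw [htxb] at h1
    linarith
  rw [hEP]
  rcases lt_or_gt_of_ne hξne with hξ0 | hξ0
  · -- ξ < 0
    rw [derivQ_neg t x ξ hξ0, ← hadef]
    rcases hsign with ⟨h0pos, hxe⟩ | ⟨h0neg, hxe⟩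
    · -- ξ < 0 < ξ₀ : different signs
      have hQ : x - t / (2 * a) = -(t * (b + a) / (2 * a * b)) := by
        rw [hxe]; field_simp; ring
      rw [hQ, abs_neg]
      apply case_diff t a b P E ha hb hP haP hE.le
      have hDub : |ξ - ξ₀| ≤ a ^ 2 + b ^ 2 := by
        rw [ha2, hb2]; exact abs_sub ξ ξ₀
      nlinarith [pow_le_pow_left₀ ha.le haP 2, pow_le_pow_left₀ hb.le hbP 2]
    · -- both negative : same sign
      have hQ : x - t / (2 * a) = -(t * (b - a) / (2 * a * b)) := by
        rw [hxe]; field_simp; ring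
      rw [hQ, abs_neg]
      apply case_same t (|ξ - ξ₀|) a b P E ha hb hP haP hbP hE ?_ hED
      have hd : (b - a) * (a + b) = ξ - ξ₀ := by
        have : b ^ 2 - a ^ 2 = ξ - ξ₀ := by
          rw [ha2, hb2, abs_of_neg hξ0, abs_of_neg h0neg]; ring
        linear_combination this
      calc |b - a| * (a + b) = |(b - a) * (a + b)| := by
              rw [abs_mul, abs_of_pos (by positivity : (0:ℝ) < a + b)]
        _ = |ξ - ξ₀| := by rw [hd]
  · -- ξ > 0
    rw [derivQ_pos t x ξ hξ0, ← hadef]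
    rcases hsign with ⟨h0pos, hxe⟩ | ⟨h0neg, hxe⟩
    · -- both positive : same sign
      have hQ : x + t / (2 * a) = t * (b - a) / (2 * a * b) := by
        rw [hxe]; field_simp; ring
      rw [hQ]
      apply case_same t (|ξ - ξ₀|) a b P E ha hb hP haP hbP hE ?_ hED
      have hd : (b - a) * (a + b) = ξ₀ - ξ := by
        have : b ^ 2 - a ^ 2 = ξ₀ - ξ := by
          rw [ha2, hb2, abs_of_pos hξ0, abs_of_pos h0pos]
        linear_combination this
      calc |b - a| * (a + b) = |(b - a) * (a + b)| := by
              rw [abs_mul, abs_of_pos (by positivity : (0:ℝ) < a + b)]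
        _ = |ξ - ξ₀| := by rw [hd, abs_sub_comm]
    · -- ξ > 0 > ξ₀ : different signs
      have hQ : x + t / (2 * a) = t * (b + a) / (2 * a * b) := by
        rw [hxe]; field_simp; ring
      rw [hQ]
      apply case_diff t a b P E ha hb hP haP hE.le
      have hDub : |ξ - ξ₀| ≤ a ^ 2 + b ^ 2 := by
        rw [ha2, hb2]; exact abs_sub ξ ξ₀
      nlinarith [pow_le_pow_left₀ ha.le haP 2, pow_le_pow_left₀ hb.le hbP 2]
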